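/- Let m, n >= 1 with m+n > 2, and let R = Q[D_{-m}, ..., D_n]/(M + L) as above, with M = (D_{-m}...D_{-1}, D_0 D_1 ... D_n) and L generated by i*D_{-m} - (i+1)*D_{-m+1} + D_{-m+i+1} for 1 <= i <= m+n-1. For 1 <= i <= m and 0 <= j <= n define D_{(-i,j)} = D_{-i+1} ... D_{-1} * D_0 ... D_{j-1} (empty product = 1). Then for every 1 <= k <= m+n-1, k! * D_0^k = sum over i from 1 to k of A(k, i-1) * D_{(-i, k-i+1)} in R, where D_{(-i,j)} is interpreted as 0 when i > m or j > n. -/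

import Mathlib

open MvPolynomial
open Fin.NatCast

/-- Eulerian numbers. -/
def eulerian : ℕ → ℕ → ℕ
  | 0, 0 => 1
  | 0, _ + 1 => 0
  | n + 1, 0 => eulerian n 0
  | n + 1, k + 1 => (k + 2) * eulerian n (k + 1) + (n - k) * eulerian n k


lemma eulerian_eq_zero : ∀ n k : ℕ, 1 ≤ n → n ≤ k → eulerian n k = 0 := by
  intro n
  induction n with
  | zero => omega
  | succ n ih =>
    intro k h1 h2
    obtain ⟨k, rfl⟩ : ∃ j, k = j + 1 := ⟨k - 1, by omega⟩
    rw [eulerian]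
    rcases Nat.eq_zero_or_pos n with rfl | hn
    · simp [eulerian]
    · rw [ih (k+1) hn (by omega), show n - k = 0 by omega]
      ring

/-- The product `∏_{j=0}^{k-1} (z + (l - j) y)`. -/
def wprod {R : Type*} [CommRing R] (z y : R) (k l : ℕ) : R :=
  ∏ j ∈ Finset.range k, (z + (((l : ℤ) - (j : ℤ) : ℤ) : R) * y)

lemma wprod_def {R : Type*} [CommRing R] (z y : R) (k l : ℕ) :
    wprod z y k l = ∏ j ∈ Finset.range k, (z + (((l : ℤ) - (j : ℤ) : ℤ) : R) * y) := rfl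

lemma wprod_succ {R : Type*} [CommRing R] (z y : R) (k l : ℕ) :
    wprod z y (k + 1) l = wprod z y k l * (z + (((l : ℤ) - (k : ℤ) : ℤ) : R) * y) :=
  Finset.prod_range_succ _ k

lemma wprod_succ' {R : Type*} [CommRing R] (z y : R) (k l : ℕ) :
    wprod z y (k + 1) (l + 1) = wprod z y k l * (z + (((l : ℤ) + 1 : ℤ) : R) * y) := by
  unfold wprod
  rw [Finset.prod_range_succ']
  have h : ∀ j ∈ Finset.range k,
      (z + ((((l + 1 : ℕ) : ℤ) - ((j + 1 : ℕ) : ℤ) : ℤ) : R) * y)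
        = (z + (((l : ℤ) - (j : ℤ) : ℤ) : R) * y) := fun j _ => by push_cast; ring
  rw [Finset.prod_congr rfl h]
  push_cast; ring

theorem worpitzky {R : Type*} [CommRing R] (z y : R) :
    ∀ k : ℕ, 1 ≤ k →
      (k.factorial : R) * z ^ k =
        ∑ l ∈ Finset.range k, (eulerian k l : R) * wprod z y k l := by
  intro k
  induction k with
  | zero => omega
  | succ k ih =>
    intro _
    rcases Nat.eq_zero_or_pos k with rfl | hk
    · simp [eulerian, wprod]
    have H := ih hk
    have key : ∀ l : ℕ, ((k : R) + 1) * z * wprod z y k l =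
        ((l : R) + 1) * wprod z y (k + 1) l
          + ((k : R) - (l : R)) * wprod z y (k + 1) (l + 1) := by
      intro l
      rw [wprod_succ, wprod_succ']
      push_cast
      ring
    have hAk : (eulerian k k : R) = 0 := by rw [eulerian_eq_zero k k hk le_rfl]; simp
    calc ((k + 1).factorial : R) * z ^ (k + 1)
        = ((k : R) + 1) * z * ((k.factorial : R) * z ^ k) := by
          rw [Nat.factorial_succ]; push_cast; ring
      _ = ∑ l ∈ Finset.range k, (eulerian k l : R) *
            (((l : R) + 1) * wprod z y (k + 1) l
              + ((k : R) - (l : R)) * wprod z y (k + 1) (l + 1)) := by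
          rw [H, Finset.mul_sum]
          refine Finset.sum_congr rfl fun l _ => ?_
          rw [← key l]; ring
      _ = (∑ l ∈ Finset.range k, ((l : R) + 1) * (eulerian k l : R) * wprod z y (k + 1) l)
          + ∑ l ∈ Finset.range k,
              ((k : R) - (l : R)) * (eulerian k l : R) * wprod z y (k + 1) (l + 1) := by
          rw [← Finset.sum_add_distrib]
          exact Finset.sum_congr rfl fun l _ => by ring
      _ = (∑ l ∈ Finset.range (k + 1), ((l : R) + 1) * (eulerian k l : R) * wprod z y (k + 1) l)
          + ∑ l ∈ Finset.range k,
              ((k : R) - (l : R)) * (eulerian k l : R) * wprod z y (k + 1) (l + 1) := by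
          rw [Finset.sum_range_succ, hAk]
          ring
      _ = ((∑ l ∈ Finset.range k,
              (((l : R) + 1) + 1) * (eulerian k (l + 1) : R) * wprod z y (k + 1) (l + 1))
            + ((0 : R) + 1) * (eulerian k 0 : R) * wprod z y (k + 1) 0)
          + ∑ l ∈ Finset.range k,
              ((k : R) - (l : R)) * (eulerian k l : R) * wprod z y (k + 1) (l + 1) := by
          rw [Finset.sum_range_succ'
            (fun l => ((l : R) + 1) * (eulerian k l : R) * wprod z y (k + 1) l) k]
          congr 1
          congr 1
          · refine Finset.sum_congr rfl fun l _ => ?_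
            push_cast; ring
          · norm_num
      _ = ∑ l ∈ Finset.range (k + 1), (eulerian (k + 1) l : R) * wprod z y (k + 1) l := by
          rw [Finset.sum_range_succ'
            (fun l => (eulerian (k + 1) l : R) * wprod z y (k + 1) l) k]
          have e0 : eulerian (k + 1) 0 = eulerian k 0 := by rw [eulerian]
          rw [e0, add_right_comm, ← Finset.sum_add_distrib]
          congr 1
          swap
          · ring
          refine Finset.sum_congr rfl fun l hl => ?_
          have hlk : l ≤ k := le_of_lt (Finset.mem_range.mp hl)
          rw [show eulerian (k + 1) (l + 1) = (l + 2) * eulerian k (l + 1) + (k - l) * eulerian k l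
            from by rw [eulerian]]
          push_cast [Nat.cast_sub hlk]
          ring

/-- The defining ideal `M + L` of the rational Chow ring of `X(m, n)`:
the variable `X k` represents the divisor class `D_{k-m}`. -/
noncomputable def chowIdeal (m n : ℕ) : Ideal (MvPolynomial (Fin (m + n + 1)) ℚ) :=
  Ideal.span
    ({∏ k ∈ Finset.univ.filter (fun k : Fin (m + n + 1) => (k : ℕ) < m), X k,
      ∏ k ∈ Finset.univ.filter (fun k : Fin (m + n + 1) => m ≤ (k : ℕ)), X k} ∪
     { q | ∃ i : ℕ, 1 ≤ i ∧ i ≤ m + n - 1 ∧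
        q = C (i : ℚ) * X ((0 : ℕ) : Fin (m + n + 1))
            - C ((i : ℚ) + 1) * X ((1 : ℕ) : Fin (m + n + 1))
            + X ((i + 1 : ℕ) : Fin (m + n + 1)) })

/-- `D_{(-i,j)} = D_{-i+1} ⋯ D_{-1} · D_0 ⋯ D_{j-1}`, i.e. the product of the
variables `X t` for `m + 1 - i ≤ t ≤ m + j - 1`, interpreted as `0` when
`i > m` or `j > n`. -/
noncomputable def Dij (m n i j : ℕ) : MvPolynomial (Fin (m + n + 1)) ℚ :=
  if m < i ∨ n < j then 0
  else ∏ t ∈ Finset.Ico (m + 1 - i) (m + j), X ((t : ℕ) : Fin (m + n + 1))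

set_option maxHeartbeats 1600000 in
theorem chow_eulerian_expansion (m n : ℕ) (hm : 1 ≤ m) (hn : 1 ≤ n)
    (hmn : 2 < m + n) (k : ℕ) (hk : 1 ≤ k) (hk' : k ≤ m + n - 1) :
    Ideal.Quotient.mk (chowIdeal m n)
        (C (k.factorial : ℚ) * X ((m : ℕ) : Fin (m + n + 1)) ^ k) =
      Ideal.Quotient.mk (chowIdeal m n)
        (∑ i ∈ Finset.Icc 1 k, C (eulerian k (i - 1) : ℚ) * Dij m n i (k - i + 1)) := by
  set φ := Ideal.Quotient.mk (chowIdeal m n) with hφ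
  set x0 := φ (X ((0 : ℕ) : Fin (m + n + 1))) with hx0
  set x1 := φ (X ((1 : ℕ) : Fin (m + n + 1))) with hx1
  set y := x1 - x0 with hy
  -- casts of constants
  have hCφ : ∀ a : ℕ, φ (C (a : ℚ)) = (a : MvPolynomial (Fin (m + n + 1)) ℚ ⧸ chowIdeal m n) := by
    intro a
    rw [map_natCast (C : ℚ →+* MvPolynomial (Fin (m + n + 1)) ℚ), map_natCast]
  -- linear relations
  have hX : ∀ j : ℕ, j ≤ m + n →
      φ (X ((j : ℕ) : Fin (m + n + 1))) =
        x0 + (j : MvPolynomial (Fin (m + n + 1)) ℚ ⧸ chowIdeal m n) * y := by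
    intro j hj
    by_cases hj0 : j = 0
    · subst hj0
      rw [← hx0]
      simp
    by_cases hj1 : j = 1
    · subst hj1
      rw [← hx1, hy]
      push_cast
      ring
    obtain ⟨i, rfl⟩ : ∃ i, j = i + 1 + 1 := ⟨j - 2, by omega⟩
    · have hq : (C ((i + 1 : ℕ) : ℚ) * X ((0 : ℕ) : Fin (m + n + 1))
          - C (((i + 1 : ℕ) : ℚ) + 1) * X ((1 : ℕ) : Fin (m + n + 1))
          + X (((i + 1) + 1 : ℕ) : Fin (m + n + 1))) ∈ chowIdeal m n := by
        apply Ideal.subset_span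
        right
        exact ⟨i + 1, by omega, by omega, rfl⟩
      have h0 := Ideal.Quotient.eq_zero_iff_mem.mpr hq
      rw [← hφ, map_add, map_sub, map_mul, map_mul, hCφ,
        show (((i + 1 : ℕ) : ℚ) + 1) = ((i + 2 : ℕ) : ℚ) by push_cast; ring, hCφ] at h0
      rw [hy]
      push_cast at h0 ⊢
      linear_combination h0
  have hz : φ (X ((m : ℕ) : Fin (m + n + 1))) =
      x0 + (m : MvPolynomial (Fin (m + n + 1)) ℚ ⧸ chowIdeal m n) * y := hX m (by omega)
  -- the two monomial relations
  have hM1 : φ (∏ t ∈ Finset.range m, X ((t : ℕ) : Fin (m + n + 1))) = 0 := by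
    have hgen : (∏ k ∈ Finset.univ.filter (fun k : Fin (m + n + 1) => (k : ℕ) < m), X k)
        = ∏ t ∈ Finset.range m, (X ((t : ℕ) : Fin (m + n + 1)) : MvPolynomial _ ℚ) := by
      refine Finset.prod_nbij' (fun a => (a : ℕ)) (fun t => (t : Fin (m + n + 1)))
        ?_ ?_ ?_ ?_ ?_
      · intro a ha
        simp only [Finset.mem_filter] at ha
        simpa using ha.2
      · intro t ht
        simp only [Finset.mem_range] at ht
        simp [Fin.val_natCast, Nat.mod_eq_of_lt (by omega : t < m + n + 1), ht]
      · intro a _; exact Fin.cast_val_eq_self a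
      · intro t ht
        simp only [Finset.mem_range] at ht
        simp [Fin.val_natCast, Nat.mod_eq_of_lt (by omega : t < m + n + 1)]
      · intro a _; rw [Fin.cast_val_eq_self]
    rw [← hgen, hφ, Ideal.Quotient.eq_zero_iff_mem]
    exact Ideal.subset_span (Set.mem_union_left _ (Set.mem_insert _ _))
  have hM2 : φ (∏ j ∈ Finset.range (n + 1), X ((m + j : ℕ) : Fin (m + n + 1))) = 0 := by
    have hgen : (∏ k ∈ Finset.univ.filter (fun k : Fin (m + n + 1) => m ≤ (k : ℕ)), X k)
        = ∏ j ∈ Finset.range (n + 1), (X ((m + j : ℕ) : Fin (m + n + 1)) : MvPolynomial _ ℚ) := by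
      refine Finset.prod_nbij' (fun a => (a : ℕ) - m) (fun t => ((m + t : ℕ) : Fin (m + n + 1)))
        ?_ ?_ ?_ ?_ ?_
      · intro a ha
        simp only [Finset.mem_filter] at ha
        have := a.isLt
        simp only [Finset.mem_range]
        omega
      · intro t ht
        simp only [Finset.mem_range] at ht
        have hv : (((m + t : ℕ) : Fin (m + n + 1)) : ℕ) = m + t := by
          rw [Fin.val_natCast, Nat.mod_eq_of_lt (by omega)]
        simp only [Finset.mem_filter, Finset.mem_univ, true_and, hv]
        omega
      · intro a ha
        simp only [Finset.mem_filter] at ha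
        show ((m + ((a : ℕ) - m) : ℕ) : Fin (m + n + 1)) = a
        rw [show m + ((a : ℕ) - m) = (a : ℕ) by omega, Fin.cast_val_eq_self]
      · intro t ht
        simp only [Finset.mem_range] at ht
        show (((m + t : ℕ) : Fin (m + n + 1)) : ℕ) - m = t
        rw [Fin.val_natCast, Nat.mod_eq_of_lt (by omega)]
        omega
      · intro a ha
        simp only [Finset.mem_filter] at ha
        show (X a : MvPolynomial (Fin (m + n + 1)) ℚ) = X ((m + ((a : ℕ) - m) : ℕ) : Fin (m + n + 1))
        rw [show m + ((a : ℕ) - m) = (a : ℕ) by omega, Fin.cast_val_eq_self]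
    rw [← hgen, hφ, Ideal.Quotient.eq_zero_iff_mem]
    exact Ideal.subset_span (Set.mem_union_left _ (Set.mem_insert_of_mem _ rfl))
  -- identify wprod terms with Dij images
  have hprod : ∀ l : ℕ, l < k →
      wprod (φ (X ((m : ℕ) : Fin (m + n + 1)))) (-y) k l
        = φ (Dij m n (l + 1) (k - l)) := by
    intro l hl
    by_cases hBm : m ≤ l
    · -- Dij = 0, product contains D_{-m} ⋯ D_{-1}
      rw [Dij, if_pos (Or.inl (by omega)), map_zero, wprod_def]
      have hsub : Finset.Ico (l - m) l ⊆ Finset.range k := by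
        intro t ht
        simp only [Finset.mem_Ico] at ht
        simp only [Finset.mem_range]
        omega
      rw [← Finset.prod_sdiff hsub]
      have h0 : (∏ j ∈ Finset.Ico (l - m) l,
          (φ (X ((m : ℕ) : Fin (m + n + 1))) + (((l : ℤ) - (j : ℤ) : ℤ) :
            MvPolynomial (Fin (m + n + 1)) ℚ ⧸ chowIdeal m n) * (-y))) = 0 := by
        rw [Finset.prod_Ico_eq_prod_range, show l - (l - m) = m by omega]
        have hc : ∀ j ∈ Finset.range m,
            (φ (X ((m : ℕ) : Fin (m + n + 1))) + (((l : ℤ) - ((l - m + j : ℕ) : ℤ) : ℤ) :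
              MvPolynomial (Fin (m + n + 1)) ℚ ⧸ chowIdeal m n) * (-y))
              = φ (X ((j : ℕ) : Fin (m + n + 1))) := by
          intro j hj
          simp only [Finset.mem_range] at hj
          rw [hX j (by omega), hz]
          push_cast [Nat.cast_sub hBm]
          ring
        rw [Finset.prod_congr rfl hc, ← map_prod]
        exact hM1
      rw [h0, mul_zero]
    · push_neg at hBm
      by_cases hCn : n < k - l
      · -- Dij = 0, product contains D_0 ⋯ D_n
        rw [Dij, if_pos (Or.inr hCn), map_zero, wprod_def]
        have hsub : Finset.Ico l (l + (n + 1)) ⊆ Finset.range k := by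
          intro t ht
          simp only [Finset.mem_Ico] at ht
          simp only [Finset.mem_range]
          omega
        rw [← Finset.prod_sdiff hsub]
        have h0 : (∏ j ∈ Finset.Ico l (l + (n + 1)),
            (φ (X ((m : ℕ) : Fin (m + n + 1))) + (((l : ℤ) - (j : ℤ) : ℤ) :
              MvPolynomial (Fin (m + n + 1)) ℚ ⧸ chowIdeal m n) * (-y))) = 0 := by
          rw [Finset.prod_Ico_eq_prod_range, show l + (n + 1) - l = n + 1 by omega]
          have hc : ∀ j ∈ Finset.range (n + 1),
              (φ (X ((m : ℕ) : Fin (m + n + 1))) + (((l : ℤ) - ((l + j : ℕ) : ℤ) : ℤ) :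
                MvPolynomial (Fin (m + n + 1)) ℚ ⧸ chowIdeal m n) * (-y))
                = φ (X ((m + j : ℕ) : Fin (m + n + 1))) := by
            intro j hj
            simp only [Finset.mem_range] at hj
            rw [hX (m + j) (by omega), hz]
            push_cast
            ring
          rw [Finset.prod_congr rfl hc, ← map_prod]
          exact hM2
        rw [h0, mul_zero]
      · -- main case
        push_neg at hCn
        rw [Dij, if_neg (by omega), map_prod,
          show m + 1 - (l + 1) = m - l by omega, Finset.prod_Ico_eq_prod_range,
          show m + (k - l) - (m - l) = k by omega, wprod_def]
        refine Finset.prod_congr rfl fun j hj => ?_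
        simp only [Finset.mem_range] at hj
        rw [hX (m - l + j) (by omega), hz]
        push_cast [Nat.cast_sub (le_of_lt hBm)]
        ring
  -- assemble
  have lhs_eq : φ (C (k.factorial : ℚ) * X ((m : ℕ) : Fin (m + n + 1)) ^ k)
      = ∑ l ∈ Finset.range k,
          (eulerian k l : MvPolynomial (Fin (m + n + 1)) ℚ ⧸ chowIdeal m n) *
            φ (Dij m n (l + 1) (k - l)) := by
    rw [map_mul, map_pow, hCφ, worpitzky _ (-y) k hk]
    exact Finset.sum_congr rfl fun l hl => by
      rw [hprod l (Finset.mem_range.mp hl)]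
  rw [lhs_eq, map_sum]
  refine Finset.sum_nbij' (fun l => l + 1) (fun i => i - 1) ?_ ?_ ?_ ?_ ?_
  · intro l hl
    simp only [Finset.mem_range] at hl
    simp only [Finset.mem_Icc]
    omega
  · intro i hi
    simp only [Finset.mem_Icc] at hi
    simp only [Finset.mem_range]
    omega
  · intro l _; show l + 1 - 1 = l; omega
  · intro i hi
    simp only [Finset.mem_Icc] at hi
    show i - 1 + 1 = i; omega
  · intro l hl
    simp only [Finset.mem_range] at hl
    rw [map_mul, hCφ, Nat.add_sub_cancel, show k - (l + 1) + 1 = k - l by omega]
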